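/- arXiv:1707.03888 — 2 statements merged into one kernel-verified Lean document; each statement's English description precedes it below -/
import Mathlib

section
/- Let p, c ≥ 1 be integers, let G be a graph with at least 2 vertices, let H_0 be a graph with χ(H_0) = c, and let H be the p-blowup of H_0. Then the tree-like product satisfies χ(T(G,H)) ≤ c · χ(G). -/
open SimpleGraph

/-- `F` is a minor of `G`: branch decomposition formulation. -/
def IsMinor {α : Type*} {β : Type*} (F : SimpleGraph α) (G : SimpleGraph β) : Prop :=
  ∃ f : α → Set β,
    (∀ a, (f a).Nonempty) ∧
    (∀ a, (G.induce (f a)).Connected) ∧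
    (∀ a a', a ≠ a' → Disjoint (f a) (f a')) ∧
    ∀ ⦃a a'⦄, F.Adj a a' → ∃ x ∈ f a, ∃ y ∈ f a', G.Adj x y

/-- Planarity, via Wagner's characterization. -/
def IsPlanar {β : Type*} (G : SimpleGraph β) : Prop :=
  ¬ IsMinor (⊤ : SimpleGraph (Fin 5)) G ∧
  ¬ IsMinor (completeBipartiteGraph (Fin 3) (Fin 3)) G

/-- `G` is `t`-apex: deleting at most `t` vertices leaves a planar graph. -/
def IsApex (t : ℕ) {β : Type*} (G : SimpleGraph β) : Prop :=
  ∃ X : Set β, X.Finite ∧ X.ncard ≤ t ∧ IsPlanar (G.induce Xᶜ)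

/-- `G` is `k`-connected. -/
def IsKConnected (k : ℕ) {β : Type*} [Fintype β] (G : SimpleGraph β) : Prop :=
  k < Fintype.card β ∧
  ∀ X : Finset β, X.card < k → (G.induce ((↑X : Set β)ᶜ)).Connected

/-- Vertices of the tree-like product `T(G,H)`: a vertex of the copy `G_x`
is encoded by the path from the root to the non-leaf tree vertex `x`
(a sequence of vertices of `G` of length `< k`) together with a vertex of `G`. -/
abbrev TPVert (V : Type*) (k : ℕ) : Type _ := (Σ i : Fin k, (Fin i → V)) × V

/-- The tree-like product `T(G,H)` of `G` with a graph `H` on the ordered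
vertex set `Fin k`. -/
def treeProd {V : Type*} (G : SimpleGraph V) {k : ℕ} (H : SimpleGraph (Fin k)) :
    SimpleGraph (TPVert V k) :=
  SimpleGraph.fromRel (fun a b =>
    (a.1 = b.1 ∧ G.Adj a.2 b.2) ∨
    (∃ hij : (a.1.1 : ℕ) < (b.1.1 : ℕ),
      (∀ t : Fin a.1.1, a.1.2 t = b.1.2 ⟨t, t.2.trans hij⟩) ∧
      a.2 = b.1.2 ⟨a.1.1, hij⟩ ∧
      H.Adj a.1.1 b.1.1))

/-- The `p`-blowup of a graph on `Fin m`, with the blowup classes consecutive. -/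
def blowupFin {m : ℕ} (H0 : SimpleGraph (Fin m)) (p : ℕ) : SimpleGraph (Fin (m * p)) where
  Adj i j := ∃ (hi : (i : ℕ) / p < m) (hj : (j : ℕ) / p < m),
    H0.Adj ⟨(i : ℕ) / p, hi⟩ ⟨(j : ℕ) / p, hj⟩
  symm := by constructor; rintro i j ⟨hi, hj, h⟩; exact ⟨hj, hi, h.symm⟩
  loopless := by constructor; rintro i ⟨hi, hj, h⟩; exact H0.loopless.irrefl _ h

/-- The strong `p`-blowup of a graph. -/
def strongBlowup {W : Type*} (H0 : SimpleGraph W) (p : ℕ) : SimpleGraph (W × Fin p) where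
  Adj a b := H0.Adj a.1 b.1 ∨ (a.1 = b.1 ∧ a.2 ≠ b.2)
  symm := by
    constructor
    rintro a b (h | ⟨h1, h2⟩)
    · exact Or.inl h.symm
    · exact Or.inr ⟨h1.symm, h2.symm⟩
  loopless := by constructor; rintro a (h | ⟨_, h⟩); exact H0.loopless.irrefl _ h; exact h rfl

/-- An `(a : b)`-coloring of `G`. -/
def HasFracColoring {W : Type*} (G : SimpleGraph W) (a b : ℕ) : Prop :=
  ∃ f : W → Finset (Fin a), (∀ w, (f w).card = b) ∧
    ∀ ⦃x y⦄, G.Adj x y → Disjoint (f x) (f y)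

/-- The fractional chromatic number. -/
noncomputable def fracChrom {W : Type*} (G : SimpleGraph W) : ℝ :=
  sInf {q : ℝ | ∃ a b : ℕ, 0 < b ∧ HasFracColoring G a b ∧ q = (a : ℝ) / (b : ℝ)}
theorem treeProd_blowup_chromatic_le {V : Type} [Fintype V] [DecidableEq V]
    (G : SimpleGraph V) (hn : 2 ≤ Fintype.card V)
    (p c : ℕ) (hp : 1 ≤ p) (hc : 1 ≤ c)
    {m : ℕ} (H0 : SimpleGraph (Fin m)) (hchi : H0.chromaticNumber = c) :
    (treeProd G (blowupFin H0 p)).chromaticNumber ≤ (c : ℕ∞) * G.chromaticNumber := by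

  classical
  -- natural chromatic number of G
  set n : ℕ := ENat.toNat G.chromaticNumber with hn
  have hGcol : G.Colorable n := G.colorable_chromaticNumber_of_fintype
  have hGne : G.chromaticNumber ≠ ⊤ :=
    chromaticNumber_ne_top_iff_exists.mpr ⟨Fintype.card V, G.colorable_of_fintype⟩
  have hGn : G.chromaticNumber = (n : ℕ∞) := (ENat.coe_toNat hGne).symm
  have hH0col : H0.Colorable c := by
    rw [← chromaticNumber_le_iff_colorable, hchi]
  obtain ⟨C0⟩ := hH0col
  obtain ⟨Cg⟩ := hGcol
  have hp' : 0 < p := hp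
  -- define coloring of the tree product
  have hcol : (treeProd G (blowupFin H0 p)).Colorable (c * n) := by
    have C : (treeProd G (blowupFin H0 p)).Coloring (Fin c × Fin n) := by
      refine Coloring.mk
        (fun a => (C0 ⟨(a.1.1 : ℕ) / p, (Nat.div_lt_iff_lt_mul hp').mpr a.1.1.2⟩, Cg a.2)) ?_
      rintro a b hab hfe
      have h1 : C0 ⟨(a.1.1 : ℕ) / p, _⟩ = C0 ⟨(b.1.1 : ℕ) / p, _⟩ :=
        congrArg Prod.fst hfe
      have h2 : Cg a.2 = Cg b.2 := congrArg Prod.snd hfe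
      rcases hab with ⟨hne, h | h⟩
      · rcases h with ⟨h1', hadj⟩ | ⟨hij, hpath, hv, hadj⟩
        · exact Cg.valid hadj h2
        · obtain ⟨hi, hj, hadj0⟩ := hadj
          exact C0.valid hadj0 (by convert h1 using 2)
      · rcases h with ⟨h1', hadj⟩ | ⟨hij, hpath, hv, hadj⟩
        · exact Cg.valid hadj h2.symm
        · obtain ⟨hi, hj, hadj0⟩ := hadj
          exact C0.valid hadj0 (by convert h1.symm using 2)
    have := C.colorable
    simpa using this
  calc (treeProd G (blowupFin H0 p)).chromaticNumber ≤ ((c * n : ℕ) : ℕ∞) :=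
        hcol.chromaticNumber_le
    _ = (c : ℕ∞) * G.chromaticNumber := by rw [hGn]; push_cast; ring
end

section
/- Let G_0 be a planar graph with n ≥ 2 vertices, let k_0 be a positive integer, and let G = T(G_0, K_{k_0×4}) be the tree-like product of G_0 with the complete k_0-partite graph with parts of size 4. If G_0 is 3-colorable, then χ(G) ≤ 3k_0; and if G_0 is not 3-colorable, then χ(G) ≥ 4k_0. -/
open SimpleGraph

/-- vertex of level `j` with history `p` and top vertex `v`. -/
def tpMk2 {V : Type*} {k : ℕ} (p : ℕ → V) (v : V) (j : ℕ) (hj : j < k) : TPVert V k :=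
  (⟨⟨j, hj⟩, fun t => p t⟩, v)

/-- vertex of level `j` along the history `p`. -/
def tpMk {V : Type*} {k : ℕ} (p : ℕ → V) (j : ℕ) (hj : j < k) : TPVert V k :=
  tpMk2 p (p j) j hj

lemma tpMk_congr {V : Type*} {k : ℕ} {p q : ℕ → V} {j : ℕ} (hj : j < k)
    (h : ∀ t, t ≤ j → p t = q t) : tpMk p j hj = tpMk q j hj := by
  unfold tpMk tpMk2
  have h1 : (fun t : Fin j => p t) = fun t : Fin j => q t := by
    funext t; exact h t t.2.le
  rw [h1, h j le_rfl]

lemma tpMk_adj_same {V : Type*} [Fintype V] {G0 : SimpleGraph V} {k0 : ℕ}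
    {p : ℕ → V} {u v : V} (h : G0.Adj u v) {j : ℕ} (hj : j < k0 * 4) :
    (treeProd G0 (blowupFin (⊤ : SimpleGraph (Fin k0)) 4)).Adj
      (tpMk2 p u j hj) (tpMk2 p v j hj) := by
  refine ⟨?_, Or.inl (Or.inl ⟨rfl, h⟩)⟩
  intro he
  exact G0.ne_of_adj h (congrArg Prod.snd he)

lemma tpMk_adj_cross {V : Type*} [Fintype V] {G0 : SimpleGraph V} {k0 : ℕ}
    {p : ℕ → V} {v : V} {i j : ℕ} (hi : i < k0 * 4) (hj : j < k0 * 4)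
    (hij : i < j) (hblock : i / 4 ≠ j / 4) :
    (treeProd G0 (blowupFin (⊤ : SimpleGraph (Fin k0)) 4)).Adj
      (tpMk p i hi) (tpMk2 p v j hj) := by
  constructor
  · intro he
    have : i = j := congrArg (fun x => (x.1.1 : ℕ)) he
    omega
  · refine Or.inl (Or.inr ⟨hij, fun t => rfl, rfl, ?_⟩)
    refine ⟨by omega, by omega, ?_⟩
    simp only [top_adj, ne_eq]
    intro he
    exact hblock (congrArg Fin.val he)

lemma exists_pick {V : Type} [Fintype V] [DecidableEq V] {G0 : SimpleGraph V}
    (hG : ¬ G0.Colorable 3) {k0 n : ℕ}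
    (c : (treeProd G0 (blowupFin (⊤ : SimpleGraph (Fin k0)) 4)).Coloring (Fin n))
    {m : ℕ} (hm : m < k0 * 4) (p : ℕ → V) :
    ∃ v : V, ∀ i (him : i < m), i / 4 = m / 4 →
      c (tpMk2 p v m hm) ≠ c (tpMk p i (him.trans hm)) := by
  classical
  set S : Finset (Fin n) :=
    ((Finset.univ : Finset (Fin (k0 * 4))).filter
      (fun i : Fin (k0 * 4) => (i : ℕ) < m ∧ (i : ℕ) / 4 = m / 4)).image
      (fun i : Fin (k0 * 4) => c (tpMk p i.1 i.2)) with hS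
  have hScard : S.card ≤ 3 := by
    refine le_trans (Finset.card_image_le) ?_
    refine le_trans (Finset.card_le_card_of_injOn (fun i => (i : ℕ) % 4)
      (t := Finset.range 3) ?_ ?_) (by simp)
    · intro i hi
      simp only [Finset.coe_filter, Finset.mem_filter, Set.mem_setOf_eq] at hi
      obtain ⟨-, h1, h2⟩ := hi
      have d1 := Nat.div_add_mod (i : ℕ) 4
      have d2 := Nat.div_add_mod m 4
      have := Nat.mod_lt m (show 0 < 4 by norm_num)
      simp only [Finset.mem_coe, Finset.mem_range]
      omega
    · intro i hi j hj hij
      simp only [Finset.coe_filter, Set.mem_setOf_eq] at hi hj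
      obtain ⟨-, hi1, hi2⟩ := hi
      obtain ⟨-, hj1, hj2⟩ := hj
      have d1 := Nat.div_add_mod (i : ℕ) 4
      have d2 := Nat.div_add_mod (j : ℕ) 4
      have hij2 : (i : ℕ) % 4 = (j : ℕ) % 4 := hij
      exact Fin.ext (by omega)
  set T : Finset (Fin n) :=
    (Finset.univ : Finset V).image (fun v => c (tpMk2 p v m hm)) with hT
  have hTcard : 4 ≤ T.card := by
    by_contra h
    push_neg at h
    apply hG
    have C3 : G0.Coloring ↥T := SimpleGraph.Coloring.mk
      (fun v => ⟨c (tpMk2 p v m hm), Finset.mem_image_of_mem _ (Finset.mem_univ v)⟩)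
      (by
        intro u v huv he
        exact c.valid (tpMk_adj_same huv hm) (congrArg Subtype.val he))
    have := C3.colorable
    rw [Fintype.card_coe] at this
    exact this.mono (by omega)
  have : ¬ T ⊆ S := fun hsub => by
    have := Finset.card_le_card hsub
    omega
  rw [Finset.not_subset] at this
  obtain ⟨t, htT, htS⟩ := this
  rw [hT, Finset.mem_image] at htT
  obtain ⟨v, -, rfl⟩ := htT
  refine ⟨v, fun i him hblock he => htS ?_⟩
  rw [hS, Finset.mem_image]
  exact ⟨⟨i, him.trans hm⟩, Finset.mem_filter.mpr ⟨Finset.mem_univ _, him, hblock⟩, he.symm⟩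

lemma exists_chain {V : Type} [Fintype V] [DecidableEq V] [Nonempty V] {G0 : SimpleGraph V}
    (hG : ¬ G0.Colorable 3) {k0 n : ℕ}
    (c : (treeProd G0 (blowupFin (⊤ : SimpleGraph (Fin k0)) 4)).Coloring (Fin n)) :
    ∀ m : ℕ, ∃ p : ℕ → V, ∀ i j (hij : i < j), j < m → ∀ (hjk : j < k0 * 4),
      i / 4 = j / 4 → c (tpMk p i (hij.trans hjk)) ≠ c (tpMk p j hjk) := by
  intro m
  induction m with
  | zero => exact ⟨fun _ => Classical.arbitrary V, fun i j _ h _ _ => by omega⟩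
  | succ m ih =>
    obtain ⟨p, hp⟩ := ih
    by_cases hmk : m < k0 * 4
    · obtain ⟨v, hv⟩ := exists_pick hG c hmk p
      refine ⟨Function.update p m v, fun i j hij hjm hjk hblock => ?_⟩
      have hupd : ∀ t, t < m → Function.update p m v t = p t := by
        intro t ht
        exact Function.update_of_ne (by omega) _ _
      rcases Nat.lt_or_ge j m with hjm' | hjm'
      · rw [tpMk_congr (hij.trans hjk) (fun t ht => hupd t (by omega)),
          tpMk_congr hjk (fun t ht => hupd t (by omega))]
        exact hp i j hij hjm' hjk hblock
      · obtain rfl : m = j := by omega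
        rw [tpMk_congr (hij.trans hjk) (fun t ht => hupd t (by omega))]
        have h2 : tpMk (Function.update p m v) m hjk = tpMk2 p v m hjk := by
          unfold tpMk tpMk2
          have h1 : (fun t : Fin m => Function.update p m v t) = fun t : Fin m => p t := by
            funext t; exact Function.update_of_ne (Nat.ne_of_lt t.2) _ _
          rw [Function.update_self]
          exact congrArg (fun f : Fin m → V => ((⟨⟨m, hjk⟩, f⟩, v) : TPVert V (k0 * 4))) h1
        rw [h2]
        exact fun he => hv i hij hblock he.symm
    · exact ⟨p, fun i j hij hjm hjk hblock => hp i j hij (by omega) hjk hblock⟩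


theorem treeProd_planar_chromatic {V : Type} [Fintype V] [DecidableEq V]
    (G0 : SimpleGraph V) (hplanar : IsPlanar G0) (hn : 2 ≤ Fintype.card V)
    (k0 : ℕ) (hk0 : 1 ≤ k0) :
    (G0.Colorable 3 →
      (treeProd G0 (blowupFin (⊤ : SimpleGraph (Fin k0)) 4)).chromaticNumber
        ≤ ((3 * k0 : ℕ) : ℕ∞)) ∧
    (¬ G0.Colorable 3 →
      ((4 * k0 : ℕ) : ℕ∞)
        ≤ (treeProd G0 (blowupFin (⊤ : SimpleGraph (Fin k0)) 4)).chromaticNumber) := by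
  have hV : Nonempty V := Fintype.card_pos_iff.mp (by omega)
  constructor
  · rintro ⟨c0⟩
    have hcol : (treeProd G0 (blowupFin (⊤ : SimpleGraph (Fin k0)) 4)).Colorable (3 * k0) := by
      have hcard : Fintype.card (Fin 3 × Fin k0) = 3 * k0 := by simp
      rw [← hcard]
      refine (SimpleGraph.Coloring.mk
        (fun a => (c0 a.2, ⟨(a.1.1 : ℕ) / 4, by
          have := a.1.1.2; omega⟩))
        ?_).colorable
      rintro a b ⟨hne, (⟨heq, hadj⟩ | ⟨hij, -, -, hH⟩) | (⟨heq, hadj⟩ | ⟨hij, -, -, hH⟩)⟩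
      · intro he
        exact c0.valid hadj (congrArg Prod.fst he)
      · obtain ⟨h1, h2, h3⟩ := hH
        intro he
        have := congrArg (fun x => (x.2 : ℕ)) he
        simp only at this
        exact (by simpa using h3 : ¬ ((a.1.1 : ℕ)/4 = (b.1.1 : ℕ)/4)) this
      · intro he
        exact c0.valid hadj.symm (congrArg Prod.fst he)
      · obtain ⟨h1, h2, h3⟩ := hH
        intro he
        have := congrArg (fun x => (x.2 : ℕ)) he
        simp only at this
        exact (by simpa using h3 : ¬ ((b.1.1 : ℕ)/4 = (a.1.1 : ℕ)/4)) this.symm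
    exact hcol.chromaticNumber_le
  · intro hG
    rw [SimpleGraph.chromaticNumber]
    refine le_iInf₂ fun n hn' => ?_
    obtain ⟨c⟩ := hn'
    obtain ⟨p, hp⟩ := exists_chain hG c (k0 * 4)
    have hinj : Function.Injective (fun j : Fin (k0 * 4) => c (tpMk p j.1 j.2)) := by
      have key : ∀ i j : Fin (k0 * 4), (i : ℕ) < (j : ℕ) →
          c (tpMk p i.1 i.2) ≠ c (tpMk p j.1 j.2) := by
        intro i j hij
        by_cases hblock : (i : ℕ) / 4 = (j : ℕ) / 4
        · exact hp i.1 j.1 hij j.2 j.2 hblock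
        · exact fun he => c.valid (tpMk_adj_cross i.2 j.2 hij hblock) he
      intro i j he
      rcases lt_trichotomy (i : ℕ) (j : ℕ) with h | h | h
      · exact absurd he (key i j h)
      · exact Fin.ext h
      · exact absurd he.symm (key j i h)
    have := Fintype.card_le_of_injective _ hinj
    simp only [Fintype.card_fin] at this
    exact_mod_cast (by omega : 4 * k0 ≤ n)
end
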